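/- Let f : ℝⁿ → ℝ be continuously differentiable, T > 0, x₀ ∈ ℝⁿ. If a continuously differentiable path x : [0,T] → ℝⁿ with x(0) = x₀ attains the minimal value f(x₀) of the action J(x) = ∫₀ᵀ ( (1/2)‖∇f(x(t))‖² + (1/2)‖ẋ(t)‖² ) dt + f(x(T)), then x satisfies ẋ(t) = −∇f(x(t)) for every t ∈ [0,T]. -/

import Mathlib

open MeasureTheory Real intervalIntegral

/-- Let `f : ℝⁿ → ℝ` be `C¹`, `T > 0`, `x₀ ∈ ℝⁿ`. If a `C¹` path
`x : [0,T] → ℝⁿ` with `x 0 = x₀` attains the minimal value `f x₀` of the action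
`J(x) = ∫₀ᵀ ((1/2)‖∇f(x t)‖² + (1/2)‖x' t‖²) dt + f (x T)`, then `x` satisfies the
gradient-descent equation `x' t = -∇f (x t)` for every `t ∈ [0,T]`. -/
theorem action_minimizer_is_gradient_flow {n : ℕ}
    (f : EuclideanSpace ℝ (Fin n) → ℝ) (hf : ContDiff ℝ 1 f)
    (T : ℝ) (hT : 0 < T) (x₀ : EuclideanSpace ℝ (Fin n))
    (x x' : ℝ → EuclideanSpace ℝ (Fin n))
    (hx : ∀ t ∈ Set.Icc (0 : ℝ) T, HasDerivAt x (x' t) t)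
    (hx' : ContinuousOn x' (Set.Icc (0 : ℝ) T))
    (hx0 : x 0 = x₀)
    (hmin : (∫ t in (0 : ℝ)..T, ((1 / 2) * ‖gradient f (x t)‖ ^ 2 + (1 / 2) * ‖x' t‖ ^ 2))
      + f (x T) = f x₀) :
    ∀ t ∈ Set.Icc (0 : ℝ) T, x' t = -(gradient f (x t)) := by
  have hIcc : Set.uIcc (0:ℝ) T = Set.Icc 0 T := Set.uIcc_of_le hT.le
  set g : ℝ → EuclideanSpace ℝ (Fin n) := fun t => gradient f (x t) with hgdef
  have hxc : ContinuousOn x (Set.Icc 0 T) :=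
    fun s hs => (hx s hs).continuousAt.continuousWithinAt
  have hgradc : Continuous fun y => gradient f y := by
    have h1 : Continuous fun y => fderiv ℝ f y := hf.continuous_fderiv one_ne_zero
    exact (InnerProductSpace.toDual ℝ
      (EuclideanSpace ℝ (Fin n))).symm.continuous.comp h1
  have hgc : ContinuousOn g (Set.Icc 0 T) := hgradc.comp_continuousOn hxc
  -- the chain rule for f ∘ x
  have hder : ∀ t ∈ Set.Icc (0:ℝ) T,
      HasDerivAt (fun s => f (x s)) (inner ℝ (g t) (x' t) : ℝ) t := by
    intro t htT
    have hfd : HasFDerivAt f (fderiv ℝ f (x t)) (x t) :=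
      (hf.differentiable one_ne_zero).differentiableAt.hasFDerivAt
    have h2 := hfd.comp_hasDerivAt t (hx t htT)
    have h3 : (inner ℝ (g t) (x' t) : ℝ) = fderiv ℝ f (x t) (x' t) := by
      simp [hgdef, gradient, InnerProductSpace.toDual_symm_apply]
    rw [h3]
    exact h2
  -- continuity of the inner product term
  have hcont_inner : ContinuousOn (fun t => (inner ℝ (g t) (x' t) : ℝ)) (Set.Icc 0 T) :=
    hgc.inner hx'
  -- fundamental theorem of calculus
  have hftc : (∫ t in (0:ℝ)..T, (inner ℝ (g t) (x' t) : ℝ)) = f (x T) - f (x 0) := by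
    apply intervalIntegral.integral_eq_sub_of_hasDerivAt
    · intro t ht; exact hder t (hIcc ▸ ht)
    · exact (hcont_inner.mono hIcc.le).intervalIntegrable
  -- integrability facts
  have hint_h : IntervalIntegrable (fun t => ‖x' t + g t‖ ^ 2) MeasureTheory.volume 0 T := by
    apply ContinuousOn.intervalIntegrable
    rw [hIcc]
    exact ((hx'.add hgc).norm.pow 2)
  have hint_inner : IntervalIntegrable (fun t => (inner ℝ (g t) (x' t) : ℝ))
      MeasureTheory.volume 0 T := by
    apply ContinuousOn.intervalIntegrable
    rw [hIcc]; exact hcont_inner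
  -- pointwise algebraic identity
  have hpt : ∀ t, (1 / 2) * ‖g t‖ ^ 2 + (1 / 2) * ‖x' t‖ ^ 2
      = (1 / 2) * ‖x' t + g t‖ ^ 2 - (inner ℝ (g t) (x' t) : ℝ) := by
    intro t
    have h1 := norm_add_sq_real (x' t) (g t)
    have hc : (inner ℝ (g t) (x' t) : ℝ) = inner ℝ (x' t) (g t) := real_inner_comm _ _
    rw [h1, hc]; ring
  -- rewrite the action integral
  have hsplit : (∫ t in (0:ℝ)..T, ((1 / 2) * ‖g t‖ ^ 2 + (1 / 2) * ‖x' t‖ ^ 2))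
      = (∫ t in (0:ℝ)..T, (1 / 2) * ‖x' t + g t‖ ^ 2)
        - ∫ t in (0:ℝ)..T, (inner ℝ (g t) (x' t) : ℝ) := by
    rw [← intervalIntegral.integral_sub (hint_h.const_mul _) hint_inner]
    exact intervalIntegral.integral_congr fun t _ => hpt t
  have hhalf : (∫ t in (0:ℝ)..T, (1 / 2) * ‖x' t + g t‖ ^ 2) = 0 := by
    have h0 : (∫ t in (0:ℝ)..T, ((1 / 2) * ‖g t‖ ^ 2 + (1 / 2) * ‖x' t‖ ^ 2))
        = f x₀ - f (x T) := by linarith [hmin]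
    rw [hsplit, hftc, hx0] at h0
    linarith
  have hzero : (∫ t in (0:ℝ)..T, ‖x' t + g t‖ ^ 2) = 0 := by
    rw [intervalIntegral.integral_const_mul] at hhalf
    linarith
  -- a.e. vanishing, upgraded to everywhere by continuity
  have hae : (fun t => ‖x' t + g t‖ ^ 2) =ᵐ[MeasureTheory.volume.restrict (Set.Ioc 0 T)]
      (0 : ℝ → ℝ) := by
    rw [← intervalIntegral.integral_eq_zero_iff_of_le_of_nonneg_ae hT.le
      (Filter.Eventually.of_forall fun t => by positivity) hint_h]
    exact hzero
  have hae' : (fun t => ‖x' t + g t‖ ^ 2) =ᵐ[MeasureTheory.volume.restrict (Set.Icc 0 T)]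
      (0 : ℝ → ℝ) := by
    rwa [Measure.restrict_congr_set MeasureTheory.Ioc_ae_eq_Icc] at hae
  have heq : Set.EqOn (fun t => ‖x' t + g t‖ ^ 2) (0 : ℝ → ℝ) (Set.Icc 0 T) := by
    apply Measure.eqOn_Icc_of_ae_eq MeasureTheory.volume hT.ne hae'
      ((hx'.add hgc).norm.pow 2) continuousOn_const
  intro t ht
  have h4 : ‖x' t + g t‖ ^ 2 = 0 := heq ht
  have h5 : x' t + g t = 0 := by
    have := pow_eq_zero_iff (n := 2) (by norm_num) |>.mp h4
    exact norm_eq_zero.mp this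
  have : x' t = -(g t) := by
    have := eq_neg_of_add_eq_zero_left h5
    exact this
  exact this
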